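/- Let J : [0,∞) → (0,∞) be continuous and l(t) = ∫₀^t ds/J(s). If u : [0,∞) → ℝ is C¹ with u(0) = 0 and ∫₀^∞ u'(t)² J(t) dt < ∞, then (1/4)·∫₀^∞ u(t)²/(l(t)² J(t)) dt ≤ ∫₀^∞ u'(t)² J(t) dt. -/

import Mathlib

open MeasureTheory Set Filter Topology

private lemma amgm_aux (x y L K : ℝ) (hL : 0 < L) (hK : 0 < K) :
    2 * x * y / L ≤ (1/2) * (x ^ 2 / (L ^ 2 * K)) + 2 * (y ^ 2 * K) := by
  rw [← sub_nonneg]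
  have h : (1/2) * (x ^ 2 / (L ^ 2 * K)) + 2 * (y ^ 2 * K) - 2 * x * y / L
      = (x - 2 * y * K * L) ^ 2 / (2 * L ^ 2 * K) := by
    field_simp
    ring
  rw [h]
  positivity

theorem stmt_3 (J : ℝ → ℝ)
    (hJcont : ContinuousOn J (Ici 0))
    (hJpos : ∀ t ∈ Ici (0:ℝ), 0 < J t)
    (l : ℝ → ℝ) (hl : ∀ t, l t = ∫ s in (0:ℝ)..t, 1 / J s)
    (u : ℝ → ℝ) (hu : ContDiff ℝ 1 u) (hu0 : u 0 = 0)
    (hfin : IntegrableOn (fun t => deriv u t ^ 2 * J t) (Ioi 0)) :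
    (1/4) * ∫ t in Ioi (0:ℝ), u t ^ 2 / (l t ^ 2 * J t) ≤
      ∫ t in Ioi (0:ℝ), deriv u t ^ 2 * J t := by
  have hRHSnn : (0:ℝ) ≤ ∫ t in Ioi (0:ℝ), deriv u t ^ 2 * J t :=
    setIntegral_nonneg measurableSet_Ioi fun t ht =>
      mul_nonneg (sq_nonneg _) (hJpos t (mem_Ici.2 (le_of_lt ht))).le
  by_cases hA : IntegrableOn (fun t => u t ^ 2 / (l t ^ 2 * J t)) (Ioi 0)
  swap
  · rw [integral_undef hA]
    simpa using hRHSnn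
  -- basic facts
  have hJne : ∀ t ∈ Ici (0:ℝ), J t ≠ 0 := fun t ht => (hJpos t ht).ne'
  have hinv_cont : ContinuousOn (fun s => 1 / J s) (Ici 0) :=
    continuousOn_const.div hJcont hJne
  have hl_fun : l = fun t => ∫ s in (0:ℝ)..t, 1 / J s := funext hl
  have hII : ∀ x : ℝ, 0 ≤ x → IntervalIntegrable (fun s => 1 / J s) volume 0 x := by
    intro x hx
    apply ContinuousOn.intervalIntegrable
    apply hinv_cont.mono
    rw [uIcc_of_le hx]
    exact Icc_subset_Ici_self
  have hlpos : ∀ t : ℝ, 0 < t → 0 < l t := by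
    intro t ht
    rw [hl]
    refine intervalIntegral.intervalIntegral_pos_of_pos_on (hII t ht.le) ?_ ht
    intro x hx
    have : 0 < J x := hJpos x (mem_Ici.2 (le_of_lt hx.1))
    positivity
  have hl_deriv : ∀ t : ℝ, 0 < t → HasDerivAt l (1 / J t) t := by
    intro t ht
    rw [hl_fun]
    have hmem : Ici (0:ℝ) ∈ 𝓝 t := Ici_mem_nhds ht
    have hct : ContinuousAt (fun s => 1 / J s) t := hinv_cont.continuousAt hmem
    exact intervalIntegral.integral_hasDerivAt_right (hII t ht.le)
      ⟨Ici 0, hmem, hinv_cont.aestronglyMeasurable measurableSet_Ici⟩ hct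
  have hl_cont : ContinuousOn l (Ioi 0) := fun t ht =>
    ((hl_deriv t ht).continuousAt).continuousWithinAt
  have hu_cont : Continuous u := hu.continuous
  have hu'_cont : Continuous (deriv u) := hu.continuous_deriv le_rfl
  have hu_deriv : ∀ t : ℝ, HasDerivAt u (deriv u t) t := fun t =>
    ((hu.differentiable one_ne_zero) t).hasDerivAt
  -- nonnegativity of g a.e.
  have hg_nonneg : (0:ℝ → ℝ) ≤ᵐ[volume.restrict (Ioi 0)] fun t => deriv u t ^ 2 * J t := by
    refine ae_restrict_of_forall_mem measurableSet_Ioi fun t ht => ?_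
    exact mul_nonneg (sq_nonneg _) (hJpos t (mem_Ici.2 (le_of_lt ht))).le
  -- key estimate on intervals
  have key : ∀ a b : ℝ, 0 < a → a < b →
      (1/2) * ∫ t in Ioc a b, u t ^ 2 / (l t ^ 2 * J t) ≤
        u a ^ 2 / l a + 2 * ∫ t in Ioi (0:ℝ), deriv u t ^ 2 * J t := by
    intro a b ha hab
    have hab' : a ≤ b := hab.le
    have hsub : Icc a b ⊆ Ioi 0 := fun x hx => lt_of_lt_of_le ha hx.1
    have hsub' : Icc a b ⊆ Ici 0 := fun x hx => mem_Ici.2 (le_of_lt (hsub hx))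
    have hlC : ContinuousOn l (Icc a b) := hl_cont.mono hsub
    have hJC : ContinuousOn J (Icc a b) := hJcont.mono hsub'
    have hlne : ∀ x ∈ Icc a b, l x ≠ 0 := fun x hx => (hlpos x (hsub hx)).ne'
    have hJne' : ∀ x ∈ Icc a b, J x ≠ 0 := fun x hx => hJne x (hsub' hx)
    -- integrands continuous on Icc a b
    have hC1 : ContinuousOn (fun t => 2 * u t * deriv u t / l t) (Icc a b) :=
      (((continuous_const.mul hu_cont).mul hu'_cont).continuousOn).div hlC hlne
    have hC2 : ContinuousOn (fun t => u t ^ 2 / (l t ^ 2 * J t)) (Icc a b) := by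
      refine ((hu_cont.pow 2).continuousOn).div ((hlC.pow 2).mul hJC) ?_
      intro x hx
      exact mul_ne_zero (pow_ne_zero 2 (hlne x hx)) (hJne' x hx)
    have hC3 : ContinuousOn (fun t => deriv u t ^ 2 * J t) (Icc a b) :=
      ((hu'_cont.pow 2).continuousOn).mul hJC
    have hI1 : IntervalIntegrable (fun t => 2 * u t * deriv u t / l t) volume a b := by
      exact (hC1.mono (by rw [uIcc_of_le hab'])).intervalIntegrable
    have hI2 : IntervalIntegrable (fun t => u t ^ 2 / (l t ^ 2 * J t)) volume a b := by
      exact (hC2.mono (by rw [uIcc_of_le hab'])).intervalIntegrable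
    have hI3 : IntervalIntegrable (fun t => deriv u t ^ 2 * J t) volume a b := by
      exact (hC3.mono (by rw [uIcc_of_le hab'])).intervalIntegrable
    -- derivative of u^2 / l
    have hder : ∀ t ∈ uIcc a b, HasDerivAt (fun s => u s ^ 2 / l s)
        (2 * u t * deriv u t / l t - u t ^ 2 / (l t ^ 2 * J t)) t := by
      intro t ht
      rw [uIcc_of_le hab'] at ht
      have htpos : 0 < t := hsub ht
      have h1 : HasDerivAt (fun s => u s ^ 2) (2 * u t * deriv u t) t := by
        have := (hu_deriv t).fun_pow 2
        refine this.congr_deriv ?_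
        push_cast
        ring
      have h2 := h1.fun_div (hl_deriv t htpos) (hlne t ht)
      refine h2.congr_deriv ?_
      have hl0 := hlne t ht
      have hJ0 := hJne' t ht
      field_simp
    -- integration by parts
    have hibp := intervalIntegral.integral_eq_sub_of_hasDerivAt hder (hI1.sub hI2)
    rw [intervalIntegral.integral_sub hI1 hI2] at hibp
    -- pointwise bound on the first integral
    have hmono : ∫ t in a..b, 2 * u t * deriv u t / l t ≤
        ∫ t in a..b, ((1/2) * (u t ^ 2 / (l t ^ 2 * J t)) + 2 * (deriv u t ^ 2 * J t)) := by
      refine intervalIntegral.integral_mono_on hab' hI1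
        ((hI2.const_mul (1/2)).add (hI3.const_mul 2)) ?_
      intro t ht
      exact amgm_aux (u t) (deriv u t) (l t) (J t) (hlpos t (hsub ht)) (hJpos t (hsub' ht))
    rw [intervalIntegral.integral_add (hI2.const_mul (1/2)) (hI3.const_mul 2),
      intervalIntegral.integral_const_mul, intervalIntegral.integral_const_mul] at hmono
    -- bound the g-integral by the full integral
    have hgle : ∫ t in a..b, deriv u t ^ 2 * J t ≤
        ∫ t in Ioi (0:ℝ), deriv u t ^ 2 * J t := by
      rw [intervalIntegral.integral_of_le hab']
      refine setIntegral_mono_set hfin hg_nonneg ?_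
      exact HasSubset.Subset.eventuallyLE
        (Ioc_subset_Ioc_left ha.le |>.trans Ioc_subset_Ioi_self |> fun h => h)
    -- boundary term at b is nonnegative
    have hb_nn : 0 ≤ u b ^ 2 / l b := by
      have := hlpos b (lt_trans ha hab)
      positivity
    rw [← intervalIntegral.integral_of_le hab']
    linarith
  -- limit b → ∞ : estimate on Ioi a
  have claim1 : ∀ a : ℝ, 0 < a →
      (1/2) * ∫ t in Ioi a, u t ^ 2 / (l t ^ 2 * J t) ≤
        u a ^ 2 / l a + 2 * ∫ t in Ioi (0:ℝ), deriv u t ^ 2 * J t := by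
    intro a ha
    have hmono : Monotone (fun n : ℕ => Ioc a (a + 1 + n)) := by
      intro m n hmn
      exact Ioc_subset_Ioc le_rfl (by have : (m:ℝ) ≤ n := Nat.cast_le.2 hmn; linarith)
    have hunion : ⋃ n : ℕ, Ioc a (a + 1 + (n:ℝ)) = Ioi a := by
      ext x
      simp only [mem_iUnion, mem_Ioc, mem_Ioi]
      constructor
      · rintro ⟨n, h, _⟩; exact h
      · intro hx
        obtain ⟨n, hn⟩ := exists_nat_ge (x - a - 1)
        exact ⟨n, hx, by linarith⟩
    have hAi : IntegrableOn (fun t => u t ^ 2 / (l t ^ 2 * J t)) (⋃ n : ℕ, Ioc a (a + 1 + (n:ℝ))) := by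
      rw [hunion]; exact hA.mono_set (Ioi_subset_Ioi ha.le)
    have htend := tendsto_setIntegral_of_monotone (fun n : ℕ => measurableSet_Ioc) hmono hAi
    rw [hunion] at htend
    refine le_of_tendsto' (htend.const_mul (1/2)) fun n => ?_
    exact key a (a + 1 + n) ha (by have : (0:ℝ) ≤ n := Nat.cast_nonneg n; linarith)
  -- boundary term tends to 0 as a → 0+
  have claim2 : Tendsto (fun a => u a ^ 2 / l a) (𝓝[>] (0:ℝ)) (𝓝 0) := by
    have hU : Tendsto (fun a => u a / a) (𝓝[>] (0:ℝ)) (𝓝 (deriv u 0)) := by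
      have h := hasDerivAt_iff_tendsto_slope.1 (hu_deriv 0)
      have h' : Tendsto (slope u 0) (𝓝[>] (0:ℝ)) (𝓝 (deriv u 0)) :=
        h.mono_left (nhdsWithin_mono 0 fun x hx => ne_of_gt hx)
      refine h'.congr' ?_
      filter_upwards [self_mem_nhdsWithin] with a ha
      simp [slope_def_field, hu0]
    have hl0 : l 0 = 0 := by rw [hl]; simp
    have hL : Tendsto (fun a => l a / a) (𝓝[>] (0:ℝ)) (𝓝 (1 / J 0)) := by
      have h0 : HasDerivWithinAt l (1 / J 0) (Ici 0) 0 := by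
        rw [hl_fun]
        exact intervalIntegral.integral_hasDerivWithinAt_right (s := Ici 0) (t := Ioi 0)
          (hII 0 le_rfl)
          ((hinv_cont.mono Ioi_subset_Ici_self).stronglyMeasurableAtFilter_nhdsWithin
            measurableSet_Ioi 0)
          ((hinv_cont 0 (self_mem_Ici)).mono Ioi_subset_Ici_self)
      have h := hasDerivWithinAt_iff_tendsto_slope.1 h0
      rw [Ici_sdiff_left] at h
      refine h.congr' ?_
      filter_upwards [self_mem_nhdsWithin] with a ha
      simp [slope_def_field, hl0]
    have hJ0pos : 0 < J 0 := hJpos 0 (le_refl (0:ℝ))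
    have hId : Tendsto (fun a : ℝ => a) (𝓝[>] (0:ℝ)) (𝓝 0) :=
      tendsto_id.mono_right nhdsWithin_le_nhds
    have hmain : Tendsto (fun a => (u a / a) ^ 2 * a / (l a / a)) (𝓝[>] (0:ℝ))
        (𝓝 (deriv u 0 ^ 2 * 0 / (1 / J 0))) :=
      ((hU.pow 2).mul hId).div hL (by positivity)
    have hval : deriv u 0 ^ 2 * 0 / (1 / J 0) = 0 := by simp
    rw [hval] at hmain
    refine Tendsto.congr' ?_ hmain
    filter_upwards [self_mem_nhdsWithin] with a ha
    have hane : (a:ℝ) ≠ 0 := ne_of_gt ha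
    have hlane : l a ≠ 0 := (hlpos a ha).ne'
    field_simp
  -- final limit a → 0+
  have haseq_pos : ∀ n : ℕ, (0:ℝ) < 1 / (n + 1) := fun n => by positivity
  have haseq_tend : Tendsto (fun n : ℕ => 1 / ((n:ℝ) + 1)) atTop (𝓝[>] (0:ℝ)) := by
    refine tendsto_nhdsWithin_of_tendsto_nhds_of_eventually_within _
      tendsto_one_div_add_atTop_nhds_zero_nat (Eventually.of_forall fun n => haseq_pos n)
  have hmono2 : Monotone (fun n : ℕ => Ioi (1 / ((n:ℝ) + 1))) := by
    intro m n hmn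
    refine Ioi_subset_Ioi ?_
    have h1 : (m:ℝ) + 1 ≤ (n:ℝ) + 1 := by
      have : (m:ℝ) ≤ n := Nat.cast_le.2 hmn
      linarith
    exact one_div_le_one_div_of_le (by positivity) h1
  have hunion2 : ⋃ n : ℕ, Ioi (1 / ((n:ℝ) + 1)) = Ioi 0 := by
    ext x
    simp only [mem_iUnion, mem_Ioi]
    constructor
    · rintro ⟨n, h⟩; exact lt_trans (haseq_pos n) h
    · intro hx
      obtain ⟨n, hn⟩ := exists_nat_one_div_lt hx
      exact ⟨n, hn⟩
  have hAi2 : IntegrableOn (fun t => u t ^ 2 / (l t ^ 2 * J t))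
      (⋃ n : ℕ, Ioi (1 / ((n:ℝ) + 1))) := by rwa [hunion2]
  have htend2 := tendsto_setIntegral_of_monotone (fun n : ℕ => measurableSet_Ioi) hmono2 hAi2
  rw [hunion2] at htend2
  have hbnd : Tendsto (fun n : ℕ => u (1 / ((n:ℝ) + 1)) ^ 2 / l (1 / ((n:ℝ) + 1))
      + 2 * ∫ t in Ioi (0:ℝ), deriv u t ^ 2 * J t) atTop
      (𝓝 (0 + 2 * ∫ t in Ioi (0:ℝ), deriv u t ^ 2 * J t)) :=
    (claim2.comp haseq_tend).add tendsto_const_nhds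
  have hfinal := le_of_tendsto_of_tendsto' (htend2.const_mul (1/2)) hbnd
    fun n => claim1 (1 / ((n:ℝ) + 1)) (haseq_pos n)
  rw [zero_add] at hfinal
  linarith
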